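/- If (A,C) is observable, then for every nonzero positive semidefinite initial condition P₀ and every t > 0, the solution P(t) to the matrix ODE dP/dt = AᵀP + PA + α·tr(P)·CᵀC (with α > 0) is positive definite. -/

import Mathlib

open Matrix

open NormedSpace

noncomputable def expm {n : ℕ} (A : Matrix (Fin n) (Fin n) ℝ) (u : ℝ) :
    Matrix (Fin n) (Fin n) ℝ := exp (u • A)

lemma expm_entry_hasDerivAt {n : ℕ} (A : Matrix (Fin n) (Fin n) ℝ) (i j : Fin n) (u : ℝ) :
    HasDerivAt (fun s : ℝ => expm A s i j) ((A * expm A u) i j) u := by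
  letI : NormedRing (Matrix (Fin n) (Fin n) ℝ) := Matrix.linftyOpNormedRing
  letI : NormedAlgebra ℝ (Matrix (Fin n) (Fin n) ℝ) := Matrix.linftyOpNormedAlgebra
  have h : HasDerivAt (fun s : ℝ => expm A s) (A * expm A u) u :=
    hasDerivAt_exp_smul_const' A u
  exact (LinearMap.toContinuousLinearMap
    (Matrix.entryLinearMap ℝ ℝ i j)).hasFDerivAt.comp_hasDerivAt u h

lemma flow_entry_hasDerivAt {n : ℕ} (A : Matrix (Fin n) (Fin n) ℝ) (t : ℝ)
    (v : Fin n → ℝ) (s : ℝ) (i : Fin n) :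
    HasDerivAt (fun r => (expm A (t - r) *ᵥ v) i)
      (-((A *ᵥ (expm A (t - s) *ᵥ v)) i)) s := by
  have base : ∀ j, HasDerivAt (fun r : ℝ => expm A (t - r) i j)
      (-((A * expm A (t - s)) i j)) s := by
    intro j
    have h1 : HasDerivAt (fun r : ℝ => t - r) (-1) s := by
      simpa using (hasDerivAt_id s).const_sub t
    have h2 := (expm_entry_hasDerivAt A i j (t - s)).comp s h1
    simpa [Function.comp_def] using h2
  have hsum : HasDerivAt (fun r => ∑ j, expm A (t - r) i j * v j)
      (∑ j, -((A * expm A (t - s)) i j) * v j) s :=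
    HasDerivAt.fun_sum (fun j _ => (base j).mul_const (v j))
  have hfun : (fun r => (expm A (t - r) *ᵥ v) i)
      = fun r => ∑ j, expm A (t - r) i j * v j := by
    funext r; simp [Matrix.mulVec, dotProduct]
  rw [hfun]
  convert hsum using 1
  rw [Matrix.mulVec_mulVec]
  simp [Matrix.mulVec, dotProduct, neg_mul]

lemma flow_entry_continuous {n : ℕ} (A : Matrix (Fin n) (Fin n) ℝ) (t : ℝ)
    (v : Fin n → ℝ) (i : Fin n) :
    Continuous (fun r => (expm A (t - r) *ᵥ v) i) :=
  continuous_iff_continuousAt.2 fun s => (flow_entry_hasDerivAt A t v s i).continuousAt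

lemma alg_identity {n m : ℕ} (A M : Matrix (Fin n) (Fin n) ℝ)
    (C : Matrix (Fin m) (Fin n) ℝ) (β : ℝ) (a b : Fin n → ℝ) :
    (-(A *ᵥ a)) ⬝ᵥ (M *ᵥ b) + (a ⬝ᵥ ((Aᵀ * M + M * A + β • (Cᵀ * C)) *ᵥ b)
      + a ⬝ᵥ (M *ᵥ (-(A *ᵥ b)))) = β * ((C *ᵥ a) ⬝ᵥ (C *ᵥ b)) := by
  have h1 : a ⬝ᵥ ((Aᵀ * M) *ᵥ b) = (A *ᵥ a) ⬝ᵥ (M *ᵥ b) := by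
    rw [← Matrix.mulVec_mulVec, Matrix.dotProduct_mulVec, Matrix.vecMul_transpose]
  have h2 : a ⬝ᵥ ((M * A) *ᵥ b) = a ⬝ᵥ (M *ᵥ (A *ᵥ b)) := by
    rw [Matrix.mulVec_mulVec]
  have h3 : a ⬝ᵥ ((β • (Cᵀ * C)) *ᵥ b) = β * ((C *ᵥ a) ⬝ᵥ (C *ᵥ b)) := by
    rw [Matrix.smul_mulVec, dotProduct_smul, smul_eq_mul,
      ← Matrix.mulVec_mulVec, Matrix.dotProduct_mulVec, Matrix.vecMul_transpose]
  simp only [Matrix.add_mulVec, dotProduct_add, Matrix.mulVec_neg, dotProduct_neg,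
    neg_dotProduct, h1, h2, h3]
  ring

lemma q_hasDerivAt {n m : ℕ} (A : Matrix (Fin n) (Fin n) ℝ) (C : Matrix (Fin m) (Fin n) ℝ)
    (α : ℝ) (P : ℝ → Matrix (Fin n) (Fin n) ℝ)
    (hODE : ∀ t, ∀ i j, HasDerivAt (fun s => P s i j)
      ((Aᵀ * P t + P t * A + (α * (P t).trace) • (Cᵀ * C)) i j) t)
    (t : ℝ) (u w : Fin n → ℝ) (s : ℝ) :
    HasDerivAt (fun r => (expm A (t - r) *ᵥ u) ⬝ᵥ (P r *ᵥ (expm A (t - r) *ᵥ w)))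
      (α * (P s).trace *
        ((C *ᵥ (expm A (t - s) *ᵥ u)) ⬝ᵥ (C *ᵥ (expm A (t - s) *ᵥ w)))) s := by
  set D := Aᵀ * P s + P s * A + (α * (P s).trace) • (Cᵀ * C) with hD
  set xs := expm A (t - s) *ᵥ u with hxs
  set ys := expm A (t - s) *ᵥ w with hys
  have hinner : ∀ i, HasDerivAt (fun r => ∑ j, P r i j * (expm A (t - r) *ᵥ w) j)
      (∑ j, (D i j * ys j + P s i j * (-((A *ᵥ ys) j)))) s :=
    fun i => HasDerivAt.fun_sum fun j _ =>
      (hODE s i j).mul (flow_entry_hasDerivAt A t w s j)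
  have houter : HasDerivAt
      (fun r => ∑ i, (expm A (t - r) *ᵥ u) i * (∑ j, P r i j * (expm A (t - r) *ᵥ w) j))
      (∑ i, (-((A *ᵥ xs) i) * (∑ j, P s i j * ys j)
        + xs i * (∑ j, (D i j * ys j + P s i j * (-((A *ᵥ ys) j)))))) s :=
    HasDerivAt.fun_sum fun i _ => (flow_entry_hasDerivAt A t u s i).mul (hinner i)
  have hfun : (fun r => (expm A (t - r) *ᵥ u) ⬝ᵥ (P r *ᵥ (expm A (t - r) *ᵥ w)))
      = fun r => ∑ i, (expm A (t - r) *ᵥ u) i * (∑ j, P r i j * (expm A (t - r) *ᵥ w) j) := by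
    funext r; simp [dotProduct, Matrix.mulVec]
  rw [hfun]
  convert houter using 1
  have : (∑ i, (-((A *ᵥ xs) i) * (∑ j, P s i j * ys j)
        + xs i * (∑ j, (D i j * ys j + P s i j * (-((A *ᵥ ys) j))))))
      = (-(A *ᵥ xs)) ⬝ᵥ (P s *ᵥ ys) + (xs ⬝ᵥ (D *ᵥ ys) + xs ⬝ᵥ (P s *ᵥ (-(A *ᵥ ys)))) := by
    simp [dotProduct, Matrix.mulVec, Finset.sum_add_distrib, mul_add,
      Finset.mul_sum, mul_neg, Pi.neg_apply]
  rw [this, hD, alg_identity]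

lemma P_entry_continuous {n m : ℕ} {A : Matrix (Fin n) (Fin n) ℝ} {C : Matrix (Fin m) (Fin n) ℝ}
    {α : ℝ} {P : ℝ → Matrix (Fin n) (Fin n) ℝ}
    (hODE : ∀ t, ∀ i j, HasDerivAt (fun s => P s i j)
      ((Aᵀ * P t + P t * A + (α * (P t).trace) • (Cᵀ * C)) i j) t)
    (i j : Fin n) : Continuous (fun s => P s i j) :=
  continuous_iff_continuousAt.2 fun s => (hODE s i j).continuousAt

lemma trace_continuous {n m : ℕ} {A : Matrix (Fin n) (Fin n) ℝ} {C : Matrix (Fin m) (Fin n) ℝ}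
    {α : ℝ} {P : ℝ → Matrix (Fin n) (Fin n) ℝ}
    (hODE : ∀ t, ∀ i j, HasDerivAt (fun s => P s i j)
      ((Aᵀ * P t + P t * A + (α * (P t).trace) • (Cᵀ * C)) i j) t) :
    Continuous (fun s => (P s).trace) := by
  simp only [Matrix.trace, Matrix.diag]
  exact continuous_finset_sum _ fun i _ => P_entry_continuous hODE i i

lemma integrand_continuous {n m : ℕ} {A : Matrix (Fin n) (Fin n) ℝ}
    {C : Matrix (Fin m) (Fin n) ℝ} {α : ℝ} {P : ℝ → Matrix (Fin n) (Fin n) ℝ}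
    (hODE : ∀ t, ∀ i j, HasDerivAt (fun s => P s i j)
      ((Aᵀ * P t + P t * A + (α * (P t).trace) • (Cᵀ * C)) i j) t)
    (t : ℝ) (u w : Fin n → ℝ) :
    Continuous (fun s => α * (P s).trace *
      ((C *ᵥ (expm A (t - s) *ᵥ u)) ⬝ᵥ (C *ᵥ (expm A (t - s) *ᵥ w)))) := by
  have hCx : ∀ (v : Fin n → ℝ) (k : Fin m),
      Continuous (fun s => (C *ᵥ (expm A (t - s) *ᵥ v)) k) := by
    intro v k
    simp only [Matrix.mulVec, dotProduct]
    exact continuous_finset_sum _ fun p _ =>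
      continuous_const.mul (by simpa [Matrix.mulVec, dotProduct]
        using flow_entry_continuous A t v p)
  apply Continuous.mul
  · exact continuous_const.mul (trace_continuous hODE)
  · simp only [dotProduct]
    exact continuous_finset_sum _ fun k _ => (hCx u k).mul (hCx w k)

lemma key_identity {n m : ℕ} {A : Matrix (Fin n) (Fin n) ℝ} {C : Matrix (Fin m) (Fin n) ℝ}
    {α : ℝ} {P : ℝ → Matrix (Fin n) (Fin n) ℝ}
    (hODE : ∀ t, ∀ i j, HasDerivAt (fun s => P s i j)
      ((Aᵀ * P t + P t * A + (α * (P t).trace) • (Cᵀ * C)) i j) t)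
    (t : ℝ) (u w : Fin n → ℝ) :
    u ⬝ᵥ (P t *ᵥ w) = (expm A t *ᵥ u) ⬝ᵥ (P 0 *ᵥ (expm A t *ᵥ w))
      + ∫ s in (0:ℝ)..t, α * (P s).trace *
          ((C *ᵥ (expm A (t - s) *ᵥ u)) ⬝ᵥ (C *ᵥ (expm A (t - s) *ᵥ w))) := by
  have hint := intervalIntegral.integral_eq_sub_of_hasDerivAt
    (f := fun r => (expm A (t - r) *ᵥ u) ⬝ᵥ (P r *ᵥ (expm A (t - r) *ᵥ w)))
    (f' := fun s => α * (P s).trace *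
      ((C *ᵥ (expm A (t - s) *ᵥ u)) ⬝ᵥ (C *ᵥ (expm A (t - s) *ᵥ w))))
    (a := 0) (b := t)
    (fun s _ => q_hasDerivAt A C α P hODE t u w s)
    ((integrand_continuous hODE t u w).intervalIntegrable 0 t)
  have ht : expm A (t - t) = 1 := by rw [sub_self]; simp [expm, exp_zero]
  simp only [ht, sub_zero, Matrix.one_mulVec] at hint
  linarith [hint]

lemma expm_neg_mul {n : ℕ} (A : Matrix (Fin n) (Fin n) ℝ) (u : ℝ) :
    expm A (-u) * expm A u = 1 := by
  rw [expm, expm, neg_smul, ← Matrix.exp_add_of_commute (-(u • A)) (u • A) (Commute.neg_left rfl)]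
  simp [exp_zero]

lemma dotProduct_self_nonneg' {k : ℕ} (v : Fin k → ℝ) : 0 ≤ v ⬝ᵥ v :=
  Finset.sum_nonneg fun i _ => mul_self_nonneg (v i)

lemma diag_entry_eq {k : ℕ} (M : Matrix (Fin k) (Fin k) ℝ) (i j : Fin k) :
    (Pi.single i 1 : Fin k → ℝ) ⬝ᵥ (M *ᵥ (Pi.single j 1 : Fin k → ℝ)) = M i j := by
  simp [Matrix.mulVec_single, single_dotProduct]

lemma posSemidef_trace_pos {k : ℕ} {M : Matrix (Fin k) (Fin k) ℝ}
    (h : M.PosSemidef) (hne : M ≠ 0) : 0 < M.trace := by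
  have hquad : ∀ v : Fin k → ℝ, 0 ≤ v ⬝ᵥ (M *ᵥ v) := by
    intro v; simpa using h.dotProduct_mulVec_nonneg v
  have hdiag : ∀ i, 0 ≤ M i i := by
    intro i
    have := hquad (Pi.single i 1)
    rwa [diag_entry_eq] at this
  have htr : 0 ≤ M.trace := Finset.sum_nonneg fun i _ => hdiag i
  rcases lt_or_eq_of_le htr with hlt | heq
  · exact hlt
  · exfalso
    apply hne
    have hzero : ∀ i, M i i = 0 := by
      have := (Finset.sum_eq_zero_iff_of_nonneg (fun i _ => hdiag i)).1 heq.symm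
      exact fun i => this i (Finset.mem_univ i)
    have hcol : ∀ i, M *ᵥ (Pi.single i 1 : Fin k → ℝ) = 0 := by
      intro i
      apply (h.dotProduct_mulVec_zero_iff (Pi.single i 1)).1
      simpa [diag_entry_eq] using hzero i
    ext i j
    have := congrFun (hcol j) i
    simpa [Matrix.mulVec_single] using this

lemma zero_on_Ioo_of_integral_zero {h : ℝ → ℝ} (hc : Continuous h) {t : ℝ} (ht : 0 < t)
    (hnn : ∀ s ∈ Set.Icc 0 t, 0 ≤ h s) (hzero : (∫ s in (0:ℝ)..t, h s) = 0) :
    ∀ s ∈ Set.Ioo 0 t, h s = 0 := by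
  by_contra hcon
  push_neg at hcon
  obtain ⟨s₀, hs₀mem, hs₀⟩ := hcon
  have hs₀pos : 0 < h s₀ :=
    lt_of_le_of_ne (hnn s₀ ⟨hs₀mem.1.le, hs₀mem.2.le⟩) (Ne.symm hs₀)
  have hopen : IsOpen {x | 0 < h x} := isOpen_lt continuous_const hc
  obtain ⟨δ, hδpos, hball⟩ := Metric.isOpen_iff.1 hopen s₀ hs₀pos
  set a := max 0 (s₀ - δ/2) with ha_def
  set b := min t (s₀ + δ/2) with hb_def
  have ha0 : 0 ≤ a := le_max_left _ _
  have hbt : b ≤ t := min_le_left _ _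
  have has : a < s₀ := max_lt hs₀mem.1 (by linarith)
  have hsb : s₀ < b := lt_min hs₀mem.2 (by linarith)
  have hab : a < b := has.trans hsb
  have hsub : ∀ x ∈ Set.Ioo a b, 0 < h x := by
    intro x hx
    apply hball
    rw [Metric.mem_ball, Real.dist_eq, abs_lt]
    have h1 : s₀ - δ/2 ≤ a := le_max_right _ _
    have h2 : b ≤ s₀ + δ/2 := min_le_right _ _
    have := hx.1; have := hx.2
    constructor <;> linarith
  have hintab : (0:ℝ) < ∫ s in a..b, h s :=
    intervalIntegral.intervalIntegral_pos_of_pos_on (hc.intervalIntegrable a b) hsub hab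
  have hint0a : (0:ℝ) ≤ ∫ s in (0:ℝ)..a, h s :=
    intervalIntegral.integral_nonneg ha0 (fun x hx => hnn x ⟨hx.1, le_trans hx.2 (le_trans hab.le hbt)⟩)
  have hintbt : (0:ℝ) ≤ ∫ s in b..t, h s :=
    intervalIntegral.integral_nonneg hbt (fun x hx => hnn x ⟨le_trans (le_trans ha0 hab.le) hx.1, hx.2⟩)
  have hadd1 : (∫ s in (0:ℝ)..a, h s) + (∫ s in a..b, h s) = ∫ s in (0:ℝ)..b, h s :=
    intervalIntegral.integral_add_adjacent_intervals (hc.intervalIntegrable 0 a) (hc.intervalIntegrable a b)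
  have hadd2 : (∫ s in (0:ℝ)..b, h s) + (∫ s in b..t, h s) = ∫ s in (0:ℝ)..t, h s :=
    intervalIntegral.integral_add_adjacent_intervals (hc.intervalIntegrable 0 b) (hc.intervalIntegrable b t)
  linarith

lemma flow_entry_hasDerivAt' {n : ℕ} (A : Matrix (Fin n) (Fin n) ℝ) (v : Fin n → ℝ)
    (u₀ : ℝ) (p : Fin n) :
    HasDerivAt (fun r => (expm A r *ᵥ v) p) ((A *ᵥ (expm A u₀ *ᵥ v)) p) u₀ := by
  have hsum : HasDerivAt (fun r => ∑ j, expm A r p j * v j)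
      (∑ j, (A * expm A u₀) p j * v j) u₀ :=
    HasDerivAt.fun_sum (fun j _ => (expm_entry_hasDerivAt A p j u₀).mul_const (v j))
  have hfun : (fun r => (expm A r *ᵥ v) p) = fun r => ∑ j, expm A r p j * v j := by
    funext r; simp [Matrix.mulVec, dotProduct]
  rw [hfun]
  convert hsum using 1
  rw [Matrix.mulVec_mulVec]
  simp [Matrix.mulVec, dotProduct]

lemma entry_sum_eq {n m : ℕ} (C : Matrix (Fin m) (Fin n) ℝ) (M : Matrix (Fin n) (Fin n) ℝ)
    (z : Fin n → ℝ) (i : Fin m) :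
    (C *ᵥ (M *ᵥ z)) i = ∑ p, (C * M) i p * z p := by
  rw [Matrix.mulVec_mulVec]
  simp [Matrix.mulVec, dotProduct]

lemma vanish_inductive {n m : ℕ} (A : Matrix (Fin n) (Fin n) ℝ)
    (C : Matrix (Fin m) (Fin n) ℝ) {t : ℝ} (v : Fin n → ℝ)
    (hbase : ∀ u ∈ Set.Ioo 0 t, C *ᵥ (expm A u *ᵥ v) = 0) :
    ∀ k, ∀ u ∈ Set.Ioo 0 t, C *ᵥ ((A ^ k) *ᵥ (expm A u *ᵥ v)) = 0 := by
  intro k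
  induction k with
  | zero =>
    intro u hu
    simpa [pow_zero, Matrix.one_mulVec] using hbase u hu
  | succ k ih =>
    intro u hu
    funext i
    have hF : HasDerivAt (fun r => ∑ p, (C * (A ^ k)) i p * (expm A r *ᵥ v) p)
        (∑ p, (C * (A ^ k)) i p * ((A *ᵥ (expm A u *ᵥ v)) p)) u :=
      HasDerivAt.fun_sum fun p _ => (flow_entry_hasDerivAt' A v u p).const_mul _
    have hzero : HasDerivAt (fun r => ∑ p, (C * (A ^ k)) i p * (expm A r *ᵥ v) p) 0 u := by
      apply HasDerivAt.congr_of_eventuallyEq (hasDerivAt_const u (0:ℝ))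
      filter_upwards [Ioo_mem_nhds hu.1 hu.2] with r hr
      have hcomp := congrFun (ih r hr) i
      rw [entry_sum_eq] at hcomp
      simpa using hcomp
    have hval := hF.unique hzero
    -- rewrite goal
    have hgoal : (C *ᵥ ((A ^ (k+1)) *ᵥ (expm A u *ᵥ v))) i
        = ∑ p, (C * (A ^ k)) i p * ((A *ᵥ (expm A u *ᵥ v)) p) := by
      rw [pow_succ, ← Matrix.mulVec_mulVec (expm A u *ᵥ v) (A ^ k) A, entry_sum_eq]
    rw [hgoal, hval]
    rfl

/-- If `(A,C)` is observable then the solution of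
`dP/dt = AᵀP + PA + α·tr(P)·CᵀC` starting from a nonzero PSD matrix
is positive definite for all `t > 0`. -/
theorem lyapunov_flow_strictly_positive
    {n m : ℕ} (A : Matrix (Fin n) (Fin n) ℝ) (C : Matrix (Fin m) (Fin n) ℝ)
    (hObs : ∀ v : Fin n → ℝ, (∀ k < n, C *ᵥ ((A ^ k) *ᵥ v) = 0) → v = 0)
    (α : ℝ) (hα : 0 < α)
    (P : ℝ → Matrix (Fin n) (Fin n) ℝ)
    (hP0 : (P 0).PosSemidef) (hP0ne : P 0 ≠ 0)
    (hODE : ∀ t, ∀ i j, HasDerivAt (fun s => P s i j)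
      ((Aᵀ * P t + P t * A + (α * (P t).trace) • (Cᵀ * C)) i j) t) :
    ∀ t > 0, (P t).PosDef := by
  intro t ht
  have hgc : Continuous (fun s => (P s).trace) := trace_continuous hODE
  have hquad0 : ∀ v : Fin n → ℝ, 0 ≤ v ⬝ᵥ (P 0 *ᵥ v) := fun v => by simpa using hP0.dotProduct_mulVec_nonneg v
  -- positivity of the congruence sum
  have hQpos : ∀ τ : ℝ,
      0 < ∑ i, ((expm A τ *ᵥ Pi.single i 1) ⬝ᵥ (P 0 *ᵥ (expm A τ *ᵥ Pi.single i 1))) := by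
    intro τ
    have hterm : ∀ i : Fin n,
        0 ≤ (expm A τ *ᵥ Pi.single i 1) ⬝ᵥ (P 0 *ᵥ (expm A τ *ᵥ Pi.single i 1)) :=
      fun i => hquad0 _
    have hsum0 : 0 ≤ ∑ i, ((expm A τ *ᵥ Pi.single i 1) ⬝ᵥ (P 0 *ᵥ (expm A τ *ᵥ Pi.single i 1))) :=
      Finset.sum_nonneg fun i _ => hterm i
    rcases lt_or_eq_of_le hsum0 with h | h
    · exact h
    · exfalso
      have hall : ∀ i, (expm A τ *ᵥ Pi.single i 1) ⬝ᵥ (P 0 *ᵥ (expm A τ *ᵥ Pi.single i 1)) = 0 :=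
        fun i => (Finset.sum_eq_zero_iff_of_nonneg (fun i _ => hterm i)).1 h.symm i
          (Finset.mem_univ i)
      have hcol : ∀ i, P 0 *ᵥ (expm A τ *ᵥ Pi.single i 1) = 0 := by
        intro i
        apply (hP0.dotProduct_mulVec_zero_iff _).1
        simpa using hall i
      have hPE : P 0 * expm A τ = 0 := by
        ext j i
        have h2 := congrFun (hcol i) j
        rw [Matrix.mulVec_mulVec] at h2
        simpa [Matrix.mulVec_single] using h2
      have hz : P 0 = 0 := by
        have h1 : expm A τ * expm A (-τ) = 1 := by
          have := expm_neg_mul A (-τ); rwa [neg_neg] at this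
        calc P 0 = P 0 * (expm A τ * expm A (-τ)) := by rw [h1, mul_one]
          _ = (P 0 * expm A τ) * expm A (-τ) := by rw [mul_assoc]
          _ = 0 := by rw [hPE, zero_mul]
      exact hP0ne hz
  have htr_formula : ∀ τ, (P τ).trace
      = ∑ i, ((Pi.single i 1 : Fin n → ℝ) ⬝ᵥ (P τ *ᵥ Pi.single i 1)) := by
    intro τ
    simp [Matrix.trace, Matrix.diag, diag_entry_eq]
  have keyineq : ∀ τ, 0 ≤ τ → (∀ s ∈ Set.Icc (0:ℝ) τ, 0 ≤ (P s).trace) → ∀ v : Fin n → ℝ,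
      (expm A τ *ᵥ v) ⬝ᵥ (P 0 *ᵥ (expm A τ *ᵥ v)) ≤ v ⬝ᵥ (P τ *ᵥ v) := by
    intro τ hτ hg v
    have hid := key_identity hODE τ v v
    have hI : 0 ≤ ∫ s in (0:ℝ)..τ, α * (P s).trace *
        ((C *ᵥ (expm A (τ - s) *ᵥ v)) ⬝ᵥ (C *ᵥ (expm A (τ - s) *ᵥ v))) :=
      intervalIntegral.integral_nonneg hτ fun s hs =>
        mul_nonneg (mul_nonneg hα.le (hg s hs)) (dotProduct_self_nonneg' _)
    linarith
  have hgpos : ∀ τ, 0 ≤ τ → 0 < (P τ).trace := by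
    by_contra hcon
    push_neg at hcon
    obtain ⟨τ₀, hτ₀, hτ₀le⟩ := hcon
    set B : Set ℝ := {s | 0 ≤ s} ∩ {s | (P s).trace ≤ 0} with hB
    have hBne : B.Nonempty := ⟨τ₀, hτ₀, hτ₀le⟩
    have hBbdd : BddBelow B := ⟨0, fun x hx => hx.1⟩
    have hBclosed : IsClosed B :=
      (isClosed_le continuous_const continuous_id).inter (isClosed_le hgc continuous_const)
    set t₁ := sInf B with ht₁def
    have ht₁mem : t₁ ∈ B := hBclosed.csInf_mem hBne hBbdd
    have ht₁0 : 0 ≤ t₁ := ht₁mem.1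
    have hg0 : 0 < (P 0).trace := posSemidef_trace_pos hP0 hP0ne
    have ht₁pos : 0 < t₁ :=
      lt_of_le_of_ne ht₁0 (fun h => (not_le.2 hg0) (h ▸ ht₁mem.2))
    have hlt : ∀ s, 0 ≤ s → s < t₁ → 0 < (P s).trace := by
      intro s hs hst
      by_contra hle
      exact (notMem_of_lt_csInf hst hBbdd) ⟨hs, not_lt.1 hle⟩
    have hnonneg : ∀ s ∈ Set.Icc (0:ℝ) t₁, 0 ≤ (P s).trace := by
      intro s hs
      rcases lt_or_eq_of_le hs.2 with h | h
      · exact (hlt s hs.1 h).le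
      · rw [h]
        have htend : Filter.Tendsto (fun s => (P s).trace) (nhdsWithin t₁ (Set.Iio t₁))
            (nhds ((P t₁).trace)) := hgc.continuousAt.mono_left nhdsWithin_le_nhds
        have hev : ∀ᶠ r in nhdsWithin t₁ (Set.Iio t₁), 0 ≤ (P r).trace := by
          filter_upwards [Ioo_mem_nhdsLT ht₁pos] with r hr
          exact (hlt r hr.1.le hr.2).le
        exact ge_of_tendsto htend hev
    have hineq := keyineq t₁ ht₁0 hnonneg
    have hsumle : ∑ i, ((expm A t₁ *ᵥ Pi.single i 1) ⬝ᵥ (P 0 *ᵥ (expm A t₁ *ᵥ Pi.single i 1)))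
        ≤ (P t₁).trace := by
      rw [htr_formula t₁]
      exact Finset.sum_le_sum fun i _ => hineq (Pi.single i 1)
    exact absurd ht₁mem.2 (not_le.2 (lt_of_lt_of_le (hQpos t₁) hsumle))
  have hIcc : ∀ s ∈ Set.Icc (0:ℝ) t, 0 ≤ (P s).trace := fun s hs => (hgpos s hs.1).le
  have hPSDq : ∀ v : Fin n → ℝ, 0 ≤ v ⬝ᵥ (P t *ᵥ v) := fun v =>
    le_trans (hquad0 _) (keyineq t ht.le hIcc v)
  -- symmetry
  have hP0sym : ∀ a b : Fin n → ℝ, a ⬝ᵥ (P 0 *ᵥ b) = b ⬝ᵥ (P 0 *ᵥ a) := by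
    intro a b
    have hPt : (P 0)ᵀ = P 0 := by
      ext i j
      have := congrFun (congrFun hP0.1 i) j
      simpa [Matrix.conjTranspose_apply] using this
    rw [Matrix.dotProduct_mulVec]
    nth_rewrite 1 [← hPt]
    rw [Matrix.vecMul_transpose, dotProduct_comm]
  have hsymt : ∀ a b : Fin n → ℝ, a ⬝ᵥ (P t *ᵥ b) = b ⬝ᵥ (P t *ᵥ a) := by
    intro a b
    rw [key_identity hODE t a b, key_identity hODE t b a]
    congr 1
    · exact hP0sym _ _
    · exact intervalIntegral.integral_congr (fun s _ => by rw [dotProduct_comm])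
  have hherm : (P t).IsHermitian := by
    ext i j
    rw [Matrix.conjTranspose_apply, star_trivial]
    have := hsymt (Pi.single j 1) (Pi.single i 1)
    rwa [diag_entry_eq, diag_entry_eq] at this
  refine posDef_iff_dotProduct_mulVec.mpr ⟨hherm, ?_⟩
  intro v hv
  have hstar : star v = v := by
    funext i; simp
  rw [hstar]
  rcases lt_or_eq_of_le (hPSDq v) with h | h
  · exact h
  · exfalso
    have hid := key_identity hODE t v v
    have hQ := hquad0 (expm A t *ᵥ v)
    have hI : 0 ≤ ∫ s in (0:ℝ)..t, α * (P s).trace *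
        ((C *ᵥ (expm A (t - s) *ᵥ v)) ⬝ᵥ (C *ᵥ (expm A (t - s) *ᵥ v))) :=
      intervalIntegral.integral_nonneg ht.le fun s hs =>
        mul_nonneg (mul_nonneg hα.le (hgpos s hs.1).le) (dotProduct_self_nonneg' _)
    have hI0 : (∫ s in (0:ℝ)..t, α * (P s).trace *
        ((C *ᵥ (expm A (t - s) *ᵥ v)) ⬝ᵥ (C *ᵥ (expm A (t - s) *ᵥ v)))) = 0 := by
      linarith
    have hvanish := zero_on_Ioo_of_integral_zero (integrand_continuous hODE t v v) ht
      (fun s hs => mul_nonneg (mul_nonneg hα.le (hgpos s hs.1).le)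
        (dotProduct_self_nonneg' _)) hI0
    have hbase : ∀ u ∈ Set.Ioo (0:ℝ) t, C *ᵥ (expm A u *ᵥ v) = 0 := by
      intro u hu
      have hs : t - u ∈ Set.Ioo (0:ℝ) t := ⟨by linarith [hu.2], by linarith [hu.1]⟩
      have hvz := hvanish (t - u) hs
      have ht_sub : t - (t - u) = u := by ring
      rw [ht_sub] at hvz
      have htrpos := hgpos (t - u) hs.1.le
      have hzz : (C *ᵥ (expm A u *ᵥ v)) ⬝ᵥ (C *ᵥ (expm A u *ᵥ v)) = 0 := by
        by_contra hne
        exact (mul_ne_zero (mul_ne_zero hα.ne' htrpos.ne') hne) hvz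
      exact dotProduct_self_eq_zero.1 hzz
    have hall := vanish_inductive A C v hbase
    have hw : expm A (t/2) *ᵥ v = 0 :=
      hObs _ (fun k _ => hall k (t/2) ⟨by linarith, by linarith⟩)
    have hv0 : v = 0 := by
      have h1 : expm A (-(t/2)) * expm A (t/2) = 1 := expm_neg_mul A (t/2)
      calc v = (expm A (-(t/2)) * expm A (t/2)) *ᵥ v := by rw [h1, Matrix.one_mulVec]
        _ = expm A (-(t/2)) *ᵥ (expm A (t/2) *ᵥ v) := by rw [← Matrix.mulVec_mulVec]
        _ = 0 := by rw [hw, Matrix.mulVec_zero]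
    exact hv hv0
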